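/- Let h : ℤ → ℂ be a sequence of rapid decay, i.e. for every natural number p, sup_{n∈ℤ} |n|^p·|h(n)| < ∞. Then for every s ∈ ℂ the double series ρ₁(s) = ∑_{n∈ℤ} h(n)·(∑_{r=1}^{|n|-1} r^{-s}) converges absolutely, and the function s ↦ ρ₁(s) is differentiable (holomorphic) on all of ℂ. -/

import Mathlib

open Complex Finset

private lemma stmt10_bound (h : ℤ → ℂ) (k : ℕ) (n : ℤ) (s : ℂ) (hs : -(k : ℝ) ≤ s.re) :
    ‖h n * ∑ r ∈ Finset.range (n.natAbs - 1), ((r : ℂ) + 1) ^ (-s)‖ ≤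
      ‖h n‖ * (n.natAbs : ℝ) ^ (k + 1) := by
  rw [norm_mul]
  gcongr
  calc ‖∑ r ∈ Finset.range (n.natAbs - 1), ((r : ℂ) + 1) ^ (-s)‖
      ≤ ∑ r ∈ Finset.range (n.natAbs - 1), ‖((r : ℂ) + 1) ^ (-s)‖ := norm_sum_le _ _
    _ ≤ ∑ _r ∈ Finset.range (n.natAbs - 1), (n.natAbs : ℝ) ^ k := by
        apply Finset.sum_le_sum
        intro r hr
        rw [Finset.mem_range] at hr
        have hm : 2 ≤ n.natAbs := by omega
        have hpos : (0 : ℝ) < (r : ℝ) + 1 := by positivity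
        have : ((r : ℂ) + 1) = (((r : ℝ) + 1 : ℝ) : ℂ) := by push_cast; ring
        rw [this, Complex.norm_cpow_eq_rpow_re_of_pos hpos]
        have h1 : ((r : ℝ) + 1) ^ (-s).re ≤ ((r : ℝ) + 1) ^ (k : ℝ) := by
          apply Real.rpow_le_rpow_of_exponent_le (by linarith [Nat.cast_nonneg (α := ℝ) r])
          simp only [Complex.neg_re]; linarith
        calc ((r : ℝ) + 1) ^ (-s).re ≤ ((r : ℝ) + 1) ^ (k : ℝ) := h1
          _ = ((r : ℝ) + 1) ^ k := Real.rpow_natCast _ _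
          _ ≤ (n.natAbs : ℝ) ^ k := by
              apply pow_le_pow_left₀ (by positivity)
              have : (r : ℝ) + 1 ≤ (n.natAbs : ℝ) := by
                have : r + 1 ≤ n.natAbs := by omega
                exact_mod_cast this
              exact this
    _ = (n.natAbs - 1 : ℕ) * (n.natAbs : ℝ) ^ k := by
        rw [Finset.sum_const, Finset.card_range, nsmul_eq_mul]
    _ ≤ (n.natAbs : ℝ) * (n.natAbs : ℝ) ^ k := by
        gcongr
        exact_mod_cast Nat.sub_le _ _
    _ = (n.natAbs : ℝ) ^ (k + 1) := by ring

private lemma stmt10_summable (h : ℤ → ℂ)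
    (hrapid : ∀ p : ℕ, ∃ C : ℝ, ∀ n : ℤ, (n.natAbs : ℝ) ^ p * ‖h n‖ ≤ C) (k : ℕ) :
    Summable (fun n : ℤ => ‖h n‖ * (n.natAbs : ℝ) ^ (k + 1)) := by
  obtain ⟨C, hC⟩ := hrapid (k + 3)
  have hsum : Summable (fun n : ℤ => C * (1 / (n : ℝ) ^ 2)) := by
    apply Summable.mul_left
    exact (Real.summable_one_div_int_pow).2 one_lt_two
  apply Summable.of_nonneg_of_le (fun n => by positivity) _ hsum
  intro n
  rcases eq_or_ne n 0 with rfl | hn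
  · simp
  · have hm : 1 ≤ n.natAbs := Int.natAbs_pos.mpr hn
    have hmpos : (0 : ℝ) < (n.natAbs : ℝ) := by exact_mod_cast hm
    have hsq : ((n : ℝ)) ^ 2 = ((n.natAbs : ℝ)) ^ 2 := by
      rw [Nat.cast_natAbs]; push_cast; rw [_root_.sq_abs]
    rw [hsq, mul_one_div, le_div_iff₀ (by positivity)]
    calc ‖h n‖ * (n.natAbs : ℝ) ^ (k + 1) * (n.natAbs : ℝ) ^ 2
        = (n.natAbs : ℝ) ^ (k + 3) * ‖h n‖ := by ring
      _ ≤ C := hC n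

theorem stmt_10 (h : ℤ → ℂ)
    (hrapid : ∀ p : ℕ, ∃ C : ℝ, ∀ n : ℤ, (n.natAbs : ℝ) ^ p * ‖h n‖ ≤ C) :
    (∀ s : ℂ, Summable (fun n : ℤ =>
      ‖h n * ∑ r ∈ Finset.range (n.natAbs - 1), ((r : ℂ) + 1) ^ (-s)‖)) ∧
    Differentiable ℂ (fun s : ℂ =>
      ∑' n : ℤ, h n * ∑ r ∈ Finset.range (n.natAbs - 1), ((r : ℂ) + 1) ^ (-s)) := by
  constructor
  · intro s
    set k := ⌈-s.re⌉₊ with hk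
    have hs : -(k : ℝ) ≤ s.re := by
      have := Nat.le_ceil (-s.re); linarith
    apply Summable.of_nonneg_of_le (fun n => norm_nonneg _)
      (fun n => stmt10_bound h k n s hs) (stmt10_summable h hrapid k)
  · intro z
    set k := ⌈-z.re⌉₊ + 1 with hk
    set U : Set ℂ := {s : ℂ | -(k : ℝ) < s.re} with hU
    have hUopen : IsOpen U := isOpen_lt continuous_const Complex.continuous_re
    have hzU : z ∈ U := by
      simp only [hU, Set.mem_setOf_eq, hk]
      push_cast
      have := Nat.le_ceil (-z.re); linarith
    have hdiff : DifferentiableOn ℂ (fun s : ℂ =>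
        ∑' n : ℤ, h n * ∑ r ∈ Finset.range (n.natAbs - 1), ((r : ℂ) + 1) ^ (-s)) U := by
      apply differentiableOn_tsum_of_summable_norm (stmt10_summable h hrapid k)
      · intro n
        apply DifferentiableOn.const_mul
        apply DifferentiableOn.fun_sum
        intro r _
        apply Differentiable.differentiableOn
        exact differentiable_neg.const_cpow (Or.inl (by
          intro hc
          have : ((r : ℂ) + 1).re = 0 := by rw [hc]; simp
          simp at this
          nlinarith [Nat.cast_nonneg (α := ℝ) r]))
      · exact hUopen
      · intro n w hw
        exact stmt10_bound h k n w (le_of_lt hw)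
    exact (hdiff.differentiableAt (hUopen.mem_nhds hzU))
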